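/- Let G and H be ample groupoids with σ-compact unit spaces and let Z be a G–H equivalence. Then there exists an open subset Y ⊆ Z such that the anchor maps r : Z → G⁰ and s : Z → H⁰ restrict to injections on Y, the set r(Y) is clopen in G⁰ and G-full, and the set s(Y) is clopen in H⁰ and H-full. -/

import Mathlib

universe u v w

/-- An (algebraic) groupoid structure on a type `G` of arrows.  The multiplication is a total
function, but all axioms involving `mul a b` are only imposed when `a` and `b` are composable,
i.e. when `src a = rng b`.  Units are the common values of `src` and `rng`. -/
structure GroupoidStruct (G : Type u) where
  src : G → G
  rng : G → G
  mul : G → G → G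
  inv : G → G
  src_src : ∀ a, src (src a) = src a
  rng_src : ∀ a, rng (src a) = src a
  src_rng : ∀ a, src (rng a) = rng a
  rng_rng : ∀ a, rng (rng a) = rng a
  mul_assoc : ∀ a b c, src a = rng b → src b = rng c → mul (mul a b) c = mul a (mul b c)
  src_mul : ∀ a b, src a = rng b → src (mul a b) = src b
  rng_mul : ∀ a b, src a = rng b → rng (mul a b) = rng a
  mul_src : ∀ a, mul a (src a) = a
  rng_mul_self : ∀ a, mul (rng a) a = a
  src_inv : ∀ a, src (inv a) = rng a
  rng_inv : ∀ a, rng (inv a) = src a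
  mul_inv : ∀ a, mul a (inv a) = rng a
  inv_mul : ∀ a, mul (inv a) a = src a

namespace GroupoidStruct

variable {G : Type u} {H : Type v}

/-- The unit space `G⁰` of a groupoid. -/
def units (S : GroupoidStruct G) : Set G := {x | S.src x = x ∧ S.rng x = x}

/-- The range map, viewed as a map `G → G⁰`. -/
def rngMap (S : GroupoidStruct G) (g : G) : S.units := ⟨S.rng g, S.src_rng g, S.rng_rng g⟩

/-- The source map, viewed as a map `G → G⁰`. -/
def srcMap (S : GroupoidStruct G) (g : G) : S.units := ⟨S.src g, S.src_src g, S.rng_src g⟩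

/-- A topological groupoid: inversion is continuous and multiplication is continuous on the
set of composable pairs. -/
structure IsTopologicalGroupoid [TopologicalSpace G] (S : GroupoidStruct G) : Prop where
  continuous_inv : Continuous S.inv
  continuousOn_mul :
    ContinuousOn (fun p : G × G => S.mul p.1 p.2) {p : G × G | S.src p.1 = S.rng p.2}

/-- An ample groupoid: a topological groupoid whose topology has a basis of compact open sets,
whose unit space is Hausdorff, and whose range and source maps are local homeomorphisms onto
the unit space. -/
structure IsAmple [TopologicalSpace G] (S : GroupoidStruct G)
    extends IsTopologicalGroupoid S : Prop where
  compact_open_basis : ∃ B : Set (Set G),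
    (∀ U ∈ B, IsCompact U ∧ IsOpen U) ∧ TopologicalSpace.IsTopologicalBasis B
  t2_units : T2Space S.units
  isLocalHomeomorph_rngMap : IsLocalHomeomorph S.rngMap
  isLocalHomeomorph_srcMap : IsLocalHomeomorph S.srcMap

/-- `K ⊆ G⁰` is `G`-full if `r(GK) = G⁰`, where `GK = s⁻¹(K)`. -/
def IsFull (S : GroupoidStruct G) (K : Set G) : Prop := S.rng '' (S.src ⁻¹' K) = S.units

/-- `K` is an open subset of the unit space (in the subspace topology of `G⁰`). -/
def IsUnitOpen [TopologicalSpace G] (S : GroupoidStruct G) (K : Set G) : Prop :=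
  K ⊆ S.units ∧ IsOpen {x : S.units | (x : G) ∈ K}

/-- `K` is a clopen subset of the unit space (in the subspace topology of `G⁰`). -/
def IsUnitClopen [TopologicalSpace G] (S : GroupoidStruct G) (K : Set G) : Prop :=
  K ⊆ S.units ∧ IsClopen {x : S.units | (x : G) ∈ K}

/-- `K` is a compact open subset of the unit space. -/
def IsUnitCompactOpen [TopologicalSpace G] (S : GroupoidStruct G) (K : Set G) : Prop :=
  K ⊆ S.units ∧ IsCompact K ∧ IsOpen {x : S.units | (x : G) ∈ K}

/-- An open bisection: an open set on which both the range and the source map restrict to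
homeomorphisms onto their images (i.e. are topological embeddings). -/
def IsOpenBisection [TopologicalSpace G] (S : GroupoidStruct G) (U : Set G) : Prop :=
  IsOpen U ∧ Topology.IsEmbedding (U.restrict S.rng) ∧ Topology.IsEmbedding (U.restrict S.src)

/-- A compact open bisection. -/
def IsCompactOpenBisection [TopologicalSpace G] (S : GroupoidStruct G) (U : Set G) : Prop :=
  IsCompact U ∧ S.IsOpenBisection U

/-- The product of two groupoids, with coordinatewise operations. -/
def prod (S : GroupoidStruct G) (T : GroupoidStruct H) : GroupoidStruct (G × H) where
  src p := (S.src p.1, T.src p.2)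
  rng p := (S.rng p.1, T.rng p.2)
  mul p q := (S.mul p.1 q.1, T.mul p.2 q.2)
  inv p := (S.inv p.1, T.inv p.2)
  src_src a := Prod.ext_iff.mpr ⟨S.src_src _, T.src_src _⟩
  rng_src a := Prod.ext_iff.mpr ⟨S.rng_src _, T.rng_src _⟩
  src_rng a := Prod.ext_iff.mpr ⟨S.src_rng _, T.src_rng _⟩
  rng_rng a := Prod.ext_iff.mpr ⟨S.rng_rng _, T.rng_rng _⟩
  mul_assoc a b c h1 h2 := by
    obtain ⟨h1a, h1b⟩ := Prod.ext_iff.mp h1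
    obtain ⟨h2a, h2b⟩ := Prod.ext_iff.mp h2
    exact Prod.ext_iff.mpr ⟨S.mul_assoc _ _ _ h1a h2a, T.mul_assoc _ _ _ h1b h2b⟩
  src_mul a b h := by
    obtain ⟨ha, hb⟩ := Prod.ext_iff.mp h
    exact Prod.ext_iff.mpr ⟨S.src_mul _ _ ha, T.src_mul _ _ hb⟩
  rng_mul a b h := by
    obtain ⟨ha, hb⟩ := Prod.ext_iff.mp h
    exact Prod.ext_iff.mpr ⟨S.rng_mul _ _ ha, T.rng_mul _ _ hb⟩
  mul_src a := Prod.ext_iff.mpr ⟨S.mul_src _, T.mul_src _⟩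
  rng_mul_self a := Prod.ext_iff.mpr ⟨S.rng_mul_self _, T.rng_mul_self _⟩
  src_inv a := Prod.ext_iff.mpr ⟨S.src_inv _, T.src_inv _⟩
  rng_inv a := Prod.ext_iff.mpr ⟨S.rng_inv _, T.rng_inv _⟩
  mul_inv a := Prod.ext_iff.mpr ⟨S.mul_inv _, T.mul_inv _⟩
  inv_mul a := Prod.ext_iff.mpr ⟨S.inv_mul _, T.inv_mul _⟩

/-- The full equivalence relation `ℛ = ℕ × ℕ`, regarded as a (discrete, principal) groupoid
with unit space `ℕ`. -/
def Rho : GroupoidStruct (ℕ × ℕ) where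
  src p := (p.2, p.2)
  rng p := (p.1, p.1)
  mul p q := (p.1, q.2)
  inv p := (p.2, p.1)
  src_src _ := rfl
  rng_src _ := rfl
  src_rng _ := rfl
  rng_rng _ := rfl
  mul_assoc _ _ _ _ _ := rfl
  src_mul _ _ _ := rfl
  rng_mul _ _ _ := rfl
  mul_src _ := rfl
  rng_mul_self _ := rfl
  src_inv _ := rfl
  rng_inv _ := rfl
  mul_inv _ := rfl
  inv_mul _ := rfl

/-- An isomorphism of topological groupoids: a homeomorphism of the arrow spaces respecting
all the groupoid operations. -/
structure GroupoidIso [TopologicalSpace G] [TopologicalSpace H]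
    (S : GroupoidStruct G) (T : GroupoidStruct H) extends G ≃ₜ H where
  map_mul : ∀ a b, S.src a = S.rng b →
    toHomeomorph (S.mul a b) = T.mul (toHomeomorph a) (toHomeomorph b)
  map_inv : ∀ a, toHomeomorph (S.inv a) = T.inv (toHomeomorph a)
  map_src : ∀ a, toHomeomorph (S.src a) = T.src (toHomeomorph a)
  map_rng : ∀ a, toHomeomorph (S.rng a) = T.rng (toHomeomorph a)

/-- The arrow space `G|_K = r⁻¹(K) ∩ s⁻¹(K)` of the restriction of `G` to `K ⊆ G⁰`,
with the subspace topology. -/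
abbrev Restrict (S : GroupoidStruct G) (K : Set G) : Type u :=
  {g : G // S.rng g ∈ K ∧ S.src g ∈ K}

variable (S : GroupoidStruct G) (K : Set G)

def rsrc (a : S.Restrict K) : S.Restrict K :=
  ⟨S.src a.1, by rw [S.rng_src]; exact a.2.2, by rw [S.src_src]; exact a.2.2⟩

def rrng (a : S.Restrict K) : S.Restrict K :=
  ⟨S.rng a.1, by rw [S.rng_rng]; exact a.2.1, by rw [S.src_rng]; exact a.2.1⟩

def rinv (a : S.Restrict K) : S.Restrict K :=
  ⟨S.inv a.1, by rw [S.rng_inv]; exact a.2.2, by rw [S.src_inv]; exact a.2.1⟩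

open Classical in
noncomputable def rmul (a b : S.Restrict K) : S.Restrict K :=
  if h : S.src a.1 = S.rng b.1 then
    ⟨S.mul a.1 b.1, by rw [S.rng_mul _ _ h]; exact a.2.1, by rw [S.src_mul _ _ h]; exact b.2.2⟩
  else a

@[simp] lemma rsrc_val (a : S.Restrict K) : (S.rsrc K a).1 = S.src a.1 := rfl
@[simp] lemma rrng_val (a : S.Restrict K) : (S.rrng K a).1 = S.rng a.1 := rfl
@[simp] lemma rinv_val (a : S.Restrict K) : (S.rinv K a).1 = S.inv a.1 := rfl

lemma rmul_val (a b : S.Restrict K) (h : S.src a.1 = S.rng b.1) :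
    (S.rmul K a b).1 = S.mul a.1 b.1 := by
  unfold rmul
  rw [dif_pos h]

/-- The restriction `G|_K` of a groupoid to a subset `K` of its unit space. -/
noncomputable def restrict : GroupoidStruct (S.Restrict K) where
  src := S.rsrc K
  rng := S.rrng K
  mul := S.rmul K
  inv := S.rinv K
  src_src a := Subtype.ext (S.src_src a.1)
  rng_src a := Subtype.ext (S.rng_src a.1)
  src_rng a := Subtype.ext (S.src_rng a.1)
  rng_rng a := Subtype.ext (S.rng_rng a.1)
  mul_assoc a b c h1 h2 := by
    have h1' : S.src a.1 = S.rng b.1 := congrArg Subtype.val h1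
    have h2' : S.src b.1 = S.rng c.1 := congrArg Subtype.val h2
    have hab := S.rmul_val K a b h1'
    have hbc := S.rmul_val K b c h2'
    apply Subtype.ext
    calc (S.rmul K (S.rmul K a b) c).1
        = S.mul (S.rmul K a b).1 c.1 :=
          S.rmul_val K _ _ (by rw [hab, S.src_mul _ _ h1']; exact h2')
      _ = S.mul (S.mul a.1 b.1) c.1 := by rw [hab]
      _ = S.mul a.1 (S.mul b.1 c.1) := S.mul_assoc _ _ _ h1' h2'
      _ = S.mul a.1 (S.rmul K b c).1 := by rw [hbc]
      _ = (S.rmul K a (S.rmul K b c)).1 :=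
          (S.rmul_val K _ _ (by rw [hbc, S.rng_mul _ _ h2']; exact h1')).symm
  src_mul a b h := by
    have h' : S.src a.1 = S.rng b.1 := congrArg Subtype.val h
    apply Subtype.ext
    show S.src (S.rmul K a b).1 = S.src b.1
    rw [S.rmul_val K a b h', S.src_mul _ _ h']
  rng_mul a b h := by
    have h' : S.src a.1 = S.rng b.1 := congrArg Subtype.val h
    apply Subtype.ext
    show S.rng (S.rmul K a b).1 = S.rng a.1
    rw [S.rmul_val K a b h', S.rng_mul _ _ h']
  mul_src a := by
    apply Subtype.ext
    rw [S.rmul_val K a _ (by rw [rsrc_val, S.rng_src]), rsrc_val]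
    exact S.mul_src a.1
  rng_mul_self a := by
    apply Subtype.ext
    rw [S.rmul_val K _ a (by rw [rrng_val, S.src_rng]), rrng_val]
    exact S.rng_mul_self a.1
  src_inv a := Subtype.ext (S.src_inv a.1)
  rng_inv a := Subtype.ext (S.rng_inv a.1)
  mul_inv a := by
    apply Subtype.ext
    rw [S.rmul_val K a _ (by rw [rinv_val, S.rng_inv]), rinv_val]
    exact S.mul_inv a.1
  inv_mul a := by
    apply Subtype.ext
    rw [S.rmul_val K _ a (by rw [rinv_val, S.src_inv]), rinv_val]
    exact S.inv_mul a.1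

variable {S K}

/-- The data of a groupoid equivalence between `G` and `H`: a space `Z` carrying commuting
free and proper continuous actions of `G` (on the left) and `H` (on the right), whose anchor
maps `ρ : Z → G⁰` and `σ : Z → H⁰` induce homeomorphisms `Z/H ≅ G⁰` and `G\Z ≅ H⁰`.
The latter conditions are encoded by requiring that the fibres of `ρ` are exactly the
`H`-orbits, that `ρ` is surjective onto `G⁰`, and that `ρ` is a topological quotient map onto
`G⁰` (and symmetrically for `σ`): this says precisely that the induced map `Z/H → G⁰` is a
homeomorphism. -/
structure GroupoidEquivalenceData [TopologicalSpace G] [TopologicalSpace H]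
    (S : GroupoidStruct G) (T : GroupoidStruct H) (Z : Type w) [TopologicalSpace Z] where
  ρ : Z → G
  σ : Z → H
  ρ_unit : ∀ z, ρ z ∈ S.units
  σ_unit : ∀ z, σ z ∈ T.units
  continuous_ρ : Continuous ρ
  continuous_σ : Continuous σ
  actL : G → Z → Z
  actR : Z → H → Z
  ρ_actL : ∀ g z, S.src g = ρ z → ρ (actL g z) = S.rng g
  σ_actL : ∀ g z, S.src g = ρ z → σ (actL g z) = σ z
  actL_unit : ∀ z, actL (ρ z) z = z
  actL_mul : ∀ g g' z, S.src g = S.rng g' → S.src g' = ρ z →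
    actL (S.mul g g') z = actL g (actL g' z)
  σ_actR : ∀ z h, σ z = T.rng h → σ (actR z h) = T.src h
  ρ_actR : ∀ z h, σ z = T.rng h → ρ (actR z h) = ρ z
  actR_unit : ∀ z, actR z (σ z) = z
  actR_mul : ∀ z h h', σ z = T.rng h → T.src h = T.rng h' →
    actR (actR z h) h' = actR z (T.mul h h')
  act_comm : ∀ g z h, S.src g = ρ z → σ z = T.rng h →
    actL g (actR z h) = actR (actL g z) h
  continuousOn_actL :
    ContinuousOn (fun p : G × Z => actL p.1 p.2) {p : G × Z | S.src p.1 = ρ p.2}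
  continuousOn_actR :
    ContinuousOn (fun p : Z × H => actR p.1 p.2) {p : Z × H | σ p.1 = T.rng p.2}
  free_actL : ∀ g z, S.src g = ρ z → actL g z = z → g = ρ z
  free_actR : ∀ z h, σ z = T.rng h → actR z h = z → h = σ z
  proper_actL : IsProperMap (fun p : {q : G × Z // S.src q.1 = ρ q.2} =>
    ((actL p.1.1 p.1.2, p.1.2) : Z × Z))
  proper_actR : IsProperMap (fun p : {q : Z × H // σ q.1 = T.rng q.2} =>
    ((actR p.1.1 p.1.2, p.1.1) : Z × Z))
  ρ_fiber_orbit : ∀ z z', ρ z = ρ z' ↔ ∃ h, σ z = T.rng h ∧ z' = actR z h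
  σ_fiber_orbit : ∀ z z', σ z = σ z' ↔ ∃ g, S.src g = ρ z ∧ z' = actL g z
  ρ_surj : Set.range ρ = S.units
  σ_surj : Set.range σ = T.units
  quotient_ρ : Topology.IsQuotientMap (fun z => (⟨ρ z, ρ_unit z⟩ : S.units))
  quotient_σ : Topology.IsQuotientMap (fun z => (⟨σ z, σ_unit z⟩ : T.units))

/-- `G` and `H` are groupoid equivalent if there exists a `G`–`H` equivalence. -/
def GroupoidEquivalent [TopologicalSpace G] [TopologicalSpace H]
    (S : GroupoidStruct G) (T : GroupoidStruct H) : Prop :=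
  ∃ (Z : Type (max u v)) (_ : TopologicalSpace Z), Nonempty (GroupoidEquivalenceData S T Z)

/-- Kakutani equivalence of ample groupoids: there are full clopen subsets `X ⊆ G⁰`, `Y ⊆ H⁰`
with `G|_X ≅ H|_Y`. -/
def KakutaniEquivalent [TopologicalSpace G] [TopologicalSpace H]
    (S : GroupoidStruct G) (T : GroupoidStruct H) : Prop :=
  ∃ (X : Set G) (Y : Set H), S.IsUnitClopen X ∧ S.IsFull X ∧ T.IsUnitClopen Y ∧ T.IsFull Y ∧
    Nonempty (GroupoidIso (S.restrict X) (T.restrict Y))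

end GroupoidStruct


section AuxAmple
set_option linter.unusedSectionVars false

open GroupoidStruct Topology

variable {G : Type u} [TopologicalSpace G] {S : GroupoidStruct G}

lemma aux_mem_units_iff_rng {g : G} : g ∈ S.units ↔ S.rng g = g := by
  constructor
  · exact fun h => h.2
  · intro h
    refine ⟨?_, h⟩
    have := S.src_rng g
    rw [h] at this
    exact this

lemma aux_isOpen_units (hS : S.IsAmple) : IsOpen S.units := by
  rw [isOpen_iff_forall_mem_open]
  intro x hx
  obtain ⟨e, hxe, he⟩ := hS.isLocalHomeomorph_rngMap x
  have hrngc : Continuous S.rng := by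
    have : Continuous S.rngMap := hS.isLocalHomeomorph_rngMap.continuous
    exact (continuous_subtype_val.comp this)
  refine ⟨e.source ∩ S.rng ⁻¹' e.source, ?_, e.open_source.inter (e.open_source.preimage hrngc), ?_⟩
  · intro g hg
    have h1 : S.rngMap (S.rng g) = S.rngMap g := by
      apply Subtype.ext
      simp only [rngMap, S.rng_rng]
    have h2 : e (S.rng g) = e g := by rw [← he]; exact h1
    have := e.injOn (by exact hg.2) (by exact hg.1) h2
    exact aux_mem_units_iff_rng.mpr this
  · exact ⟨hxe, by rw [Set.mem_preimage, hx.2]; exact hxe⟩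

lemma aux_exists_compactOpen_nhd (hS : S.IsAmple) (x : S.units) {O : Set S.units}
    (hO : IsOpen O) (hx : x ∈ O) :
    ∃ A : Set S.units, IsCompact A ∧ IsOpen A ∧ x ∈ A ∧ A ⊆ O := by
  obtain ⟨O', hO', hOeq⟩ := isOpen_induced_iff.mp hO
  obtain ⟨B, hB, hbasis⟩ := hS.compact_open_basis
  have hxO'' : (x : G) ∈ O' ∩ S.units := by
    constructor
    · show (x : G) ∈ O'
      have : x ∈ Subtype.val ⁻¹' O' := hOeq ▸ hx
      exact this
    · exact x.2
  obtain ⟨U, hUB, hxU, hUsub⟩ := hbasis.exists_subset_of_mem_open hxO''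
    (hO'.inter (aux_isOpen_units hS))
  obtain ⟨hUc, hUo⟩ := hB U hUB
  refine ⟨Subtype.val ⁻¹' U, ?_, hUo.preimage continuous_subtype_val, hxU, ?_⟩
  · rw [Topology.IsEmbedding.subtypeVal.isCompact_iff]
    have : Subtype.val '' (Subtype.val ⁻¹' U : Set S.units) = U := by
      rw [Subtype.image_preimage_coe]
      exact Set.inter_eq_right.mpr (fun g hg => (hUsub hg).2)
    rw [this]; exact hUc
  · intro a ha
    have : (a : G) ∈ O' := (hUsub ha).1
    rw [← hOeq]; exact this

lemma aux_exists_exhaustion (hS : S.IsAmple) (hSc : IsSigmaCompact S.units) :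
    ∃ A : ℕ → Set S.units, (∀ n, IsCompact (A n)) ∧ (∀ n, IsOpen (A n)) ∧
      (⋃ n, A n) = Set.univ := by
  obtain ⟨K, hKc, hKU⟩ := hSc
  have hKsub : ∀ n, K n ⊆ S.units := fun n => hKU ▸ Set.subset_iUnion K n
  have key : ∀ n, ∃ A : Set S.units, IsCompact A ∧ IsOpen A ∧
      (Subtype.val ⁻¹' K n : Set S.units) ⊆ A := by
    intro n
    have hKn : IsCompact (Subtype.val ⁻¹' K n : Set S.units) := by
      rw [Topology.IsEmbedding.subtypeVal.isCompact_iff]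
      have : Subtype.val '' (Subtype.val ⁻¹' K n : Set S.units) = K n := by
        rw [Subtype.image_preimage_coe]
        exact Set.inter_eq_right.mpr (hKsub n)
      rw [this]; exact hKc n
    have hcov : (Subtype.val ⁻¹' K n : Set S.units) ⊆
        ⋃ i : {A : Set S.units // IsCompact A ∧ IsOpen A}, i.1 := by
      intro x _
      obtain ⟨A, hAc, hAo, hxA, _⟩ := aux_exists_compactOpen_nhd hS x isOpen_univ (Set.mem_univ x)
      exact Set.mem_iUnion.mpr ⟨⟨A, hAc, hAo⟩, hxA⟩
    obtain ⟨t, ht⟩ := hKn.elim_finite_subcover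
      (fun i : {A : Set S.units // IsCompact A ∧ IsOpen A} => i.1)
      (fun i => i.2.2) hcov
    refine ⟨⋃ i ∈ t, i.1, ?_, ?_, ht⟩
    · exact t.finite_toSet.isCompact_biUnion (fun i _ => i.2.1)
    · exact isOpen_biUnion (fun i _ => i.2.2)
  choose A hAc hAo hAsub using key
  refine ⟨A, hAc, hAo, ?_⟩
  ext x
  simp only [Set.mem_iUnion, Set.mem_univ, iff_true]
  have : (x : G) ∈ ⋃ n, K n := by rw [hKU]; exact x.2
  obtain ⟨n, hn⟩ := Set.mem_iUnion.mp this
  exact ⟨n, hAsub n hn⟩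

/-- The orbit relation on the unit space. -/
def relU (S : GroupoidStruct G) (u v : S.units) : Prop :=
  ∃ g, S.src g = (u : G) ∧ S.rng g = (v : G)

lemma relU_refl (u : S.units) : relU S u u := ⟨(u : G), u.2.1, u.2.2⟩

lemma relU_symm {u v : S.units} (h : relU S u v) : relU S v u := by
  obtain ⟨g, h1, h2⟩ := h
  exact ⟨S.inv g, by rw [S.src_inv, h2], by rw [S.rng_inv, h1]⟩

lemma relU_trans {u v w : S.units} (h1 : relU S u v) (h2 : relU S v w) : relU S u w := by
  obtain ⟨g1, hg1s, hg1r⟩ := h1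
  obtain ⟨g2, hg2s, hg2r⟩ := h2
  have hcomp : S.src g2 = S.rng g1 := by rw [hg2s, hg1r]
  exact ⟨S.mul g2 g1, by rw [S.src_mul _ _ hcomp, hg1s], by rw [S.rng_mul _ _ hcomp, hg2r]⟩

/-- Saturation of a subset of the unit space. -/
def satU (S : GroupoidStruct G) (K : Set S.units) : Set S.units :=
  {v | ∃ u ∈ K, relU S u v}

lemma subset_satU {K : Set S.units} : K ⊆ satU S K :=
  fun v hv => ⟨v, hv, relU_refl v⟩

lemma satU_mono {K K' : Set S.units} (h : K ⊆ K') : satU S K ⊆ satU S K' :=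
  fun v ⟨u, hu, hr⟩ => ⟨u, h hu, hr⟩

lemma relU_mem_satU {K : Set S.units} {v w : S.units} (hv : v ∈ satU S K)
    (h : relU S v w) : w ∈ satU S K := by
  obtain ⟨u, hu, hr⟩ := hv
  exact ⟨u, hu, relU_trans hr h⟩

lemma satU_eq_image (K : Set S.units) :
    satU S K = S.rngMap '' (S.srcMap ⁻¹' K) := by
  ext v
  constructor
  · rintro ⟨u, hu, g, h1, h2⟩
    refine ⟨g, ?_, ?_⟩
    · show S.srcMap g ∈ K
      have : S.srcMap g = u := Subtype.ext h1
      rw [this]; exact hu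
    · exact Subtype.ext h2
  · rintro ⟨g, hg, hgv⟩
    exact ⟨S.srcMap g, hg, g, rfl, congrArg Subtype.val hgv⟩

lemma isOpen_satU (hS : S.IsAmple) {K : Set S.units} (hK : IsOpen K) :
    IsOpen (satU S K) := by
  rw [satU_eq_image]
  exact hS.isLocalHomeomorph_rngMap.isOpenMap _
    (hK.preimage hS.isLocalHomeomorph_srcMap.continuous)

end AuxAmple


section AuxEquiv
set_option linter.unusedSectionVars false

open GroupoidStruct Topology

variable {G : Type u} {H : Type v} {Z : Type w}
  [TopologicalSpace G] [TopologicalSpace H] [TopologicalSpace Z]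
  {S : GroupoidStruct G} {T : GroupoidStruct H}

/-- The anchor map `ρ` as a map to the unit space. -/
def rhoM (E : GroupoidEquivalenceData S T Z) : Z → S.units := fun z => ⟨E.ρ z, E.ρ_unit z⟩

/-- The anchor map `σ` as a map to the unit space. -/
def sigM (E : GroupoidEquivalenceData S T Z) : Z → T.units := fun z => ⟨E.σ z, E.σ_unit z⟩

variable (E : GroupoidEquivalenceData S T Z)

lemma rhoM_continuous : Continuous (rhoM E) := E.quotient_ρ.continuous

lemma sigM_continuous : Continuous (sigM E) := E.quotient_σ.continuous

lemma rhoM_isOpenMap (hT : T.IsAmple) : IsOpenMap (rhoM E) := by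
  intro V hV
  have hpre : rhoM E ⁻¹' (rhoM E '' V) =
      {z | ∃ v ∈ V, ∃ h, E.σ v = T.rng h ∧ z = E.actR v h} := by
    ext z
    simp only [Set.mem_preimage, Set.mem_image, Set.mem_setOf_eq]
    constructor
    · rintro ⟨v, hv, hveq⟩
      have hveq' : E.ρ v = E.ρ z := congrArg Subtype.val hveq
      obtain ⟨h, h1, h2⟩ := (E.ρ_fiber_orbit v z).mp hveq'
      exact ⟨v, hv, h, h1, h2⟩
    · rintro ⟨v, hv, h, h1, h2⟩
      exact ⟨v, hv, Subtype.ext ((E.ρ_fiber_orbit v z).mpr ⟨h, h1, h2⟩)⟩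
  apply (E.quotient_ρ.isOpen_preimage).mp
  show IsOpen (rhoM E ⁻¹' (rhoM E '' V))
  rw [hpre, isOpen_iff_forall_mem_open]
  rintro z' ⟨v, hv, h, h1, h2⟩
  have hσz' : E.σ z' = T.src h := by rw [h2]; exact E.σ_actR v h h1
  have hcomp : E.σ z' = T.rng (T.inv h) := by rw [hσz', T.rng_inv]
  have hc := E.continuousOn_actR (z', T.inv h) hcomp
  have hval : E.actR z' (T.inv h) = v := by
    rw [h2, E.actR_mul v h (T.inv h) h1 (T.rng_inv h).symm, T.mul_inv h, ← h1]
    exact E.actR_unit v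
  have hmem : V ∈ nhds ((fun p : Z × H => E.actR p.1 p.2) (z', T.inv h)) := by
    show V ∈ nhds (E.actR z' (T.inv h))
    rw [hval]; exact hV.mem_nhds hv
  have hpre2 := hc hmem
  rw [Filter.mem_map, mem_nhdsWithin] at hpre2
  obtain ⟨O', hO'open, hO'mem, hO'sub⟩ := hpre2
  obtain ⟨O, W, hOo, hWo, hzO, hhW, hOW⟩ := isOpen_prod_iff.mp hO'open z' (T.inv h) hO'mem
  refine ⟨O ∩ sigM E ⁻¹' (T.rngMap '' W), ?_, ?_, ?_⟩
  · rintro w ⟨hwO, hwpre⟩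
    obtain ⟨k, hkW, hkeq⟩ := hwpre
    have hσw : E.σ w = T.rng k := (congrArg Subtype.val hkeq).symm
    have hOWmem : (w, k) ∈ O' ∩ {p : Z × H | E.σ p.1 = T.rng p.2} := ⟨hOW ⟨hwO, hkW⟩, hσw⟩
    have hVwk : E.actR w k ∈ V := hO'sub hOWmem
    refine ⟨E.actR w k, hVwk, T.inv k, ?_, ?_⟩
    · rw [E.σ_actR w k hσw, T.rng_inv]
    · rw [E.actR_mul w k (T.inv k) hσw (T.rng_inv k).symm, T.mul_inv k, ← hσw]
      exact (E.actR_unit w).symm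
  · exact hOo.inter ((hT.isLocalHomeomorph_rngMap.isOpenMap W hWo).preimage (sigM_continuous E))
  · refine ⟨hzO, ⟨T.inv h, hhW, Subtype.ext ?_⟩⟩
    show T.rng (T.inv h) = E.σ z'
    rw [T.rng_inv]; exact hσz'.symm

lemma sigM_isOpenMap (hS : S.IsAmple) : IsOpenMap (sigM E) := by
  intro V hV
  have hpre : sigM E ⁻¹' (sigM E '' V) =
      {z | ∃ v ∈ V, ∃ g, S.src g = E.ρ v ∧ z = E.actL g v} := by
    ext z
    simp only [Set.mem_preimage, Set.mem_image, Set.mem_setOf_eq]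
    constructor
    · rintro ⟨v, hv, hveq⟩
      have hveq' : E.σ v = E.σ z := congrArg Subtype.val hveq
      obtain ⟨g, h1, h2⟩ := (E.σ_fiber_orbit v z).mp hveq'
      exact ⟨v, hv, g, h1, h2⟩
    · rintro ⟨v, hv, g, h1, h2⟩
      exact ⟨v, hv, Subtype.ext ((E.σ_fiber_orbit v z).mpr ⟨g, h1, h2⟩)⟩
  apply (E.quotient_σ.isOpen_preimage).mp
  show IsOpen (sigM E ⁻¹' (sigM E '' V))
  rw [hpre, isOpen_iff_forall_mem_open]
  rintro z' ⟨v, hv, g, h1, h2⟩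
  have hρz' : E.ρ z' = S.rng g := by rw [h2]; exact E.ρ_actL g v h1
  have hcomp : S.src (S.inv g) = E.ρ z' := by rw [S.src_inv, hρz']
  have hc := E.continuousOn_actL (S.inv g, z') hcomp
  have hval : E.actL (S.inv g) z' = v := by
    rw [h2, ← E.actL_mul (S.inv g) g v (S.src_inv g) h1, S.inv_mul g, h1]
    exact E.actL_unit v
  have hmem : V ∈ nhds ((fun p : G × Z => E.actL p.1 p.2) (S.inv g, z')) := by
    show V ∈ nhds (E.actL (S.inv g) z')
    rw [hval]; exact hV.mem_nhds hv
  have hpre2 := hc hmem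
  rw [Filter.mem_map, mem_nhdsWithin] at hpre2
  obtain ⟨O', hO'open, hO'mem, hO'sub⟩ := hpre2
  obtain ⟨W, O, hWo, hOo, hhW, hzO, hOW⟩ := isOpen_prod_iff.mp hO'open (S.inv g) z' hO'mem
  refine ⟨O ∩ rhoM E ⁻¹' (S.srcMap '' W), ?_, ?_, ?_⟩
  · rintro w ⟨hwO, hwpre⟩
    obtain ⟨k, hkW, hkeq⟩ := hwpre
    have hρw : S.src k = E.ρ w := congrArg Subtype.val hkeq
    have hOWmem : (k, w) ∈ O' ∩ {p : G × Z | S.src p.1 = E.ρ p.2} := ⟨hOW ⟨hkW, hwO⟩, hρw⟩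
    have hVwk : E.actL k w ∈ V := hO'sub hOWmem
    refine ⟨E.actL k w, hVwk, S.inv k, ?_, ?_⟩
    · rw [S.src_inv]; exact (E.ρ_actL k w hρw).symm
    · rw [← E.actL_mul (S.inv k) k w (S.src_inv k) hρw, S.inv_mul k, hρw]
      exact (E.actL_unit w).symm
  · exact hOo.inter ((hS.isLocalHomeomorph_srcMap.isOpenMap W hWo).preimage (rhoM_continuous E))
  · refine ⟨hzO, ⟨S.inv g, hhW, Subtype.ext ?_⟩⟩
    show S.src (S.inv g) = E.ρ z'
    rw [S.src_inv, hρz']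

lemma exists_inj_sigma (hS : S.IsAmple) (z₀ : Z) :
    ∃ U : Set Z, IsOpen U ∧ z₀ ∈ U ∧ Set.InjOn E.σ U := by
  have hprop : IsProperMap (fun p : {q : G × Z // S.src q.1 = E.ρ q.2} =>
      ((E.actL p.1.1 p.1.2, p.1.2) : Z × Z)) := E.proper_actL
  set Φ : {q : G × Z // S.src q.1 = E.ρ q.2} → Z × Z :=
    fun p => (E.actL p.1.1 p.1.2, p.1.2) with hΦdef
  have hΦinj : Function.Injective Φ := by
    rintro ⟨⟨g, z⟩, hp⟩ ⟨⟨g', z''⟩, hp'⟩ heq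
    obtain ⟨hact, hz⟩ := Prod.ext_iff.mp heq
    simp only [hΦdef] at hact hz hp hp'
    subst hz
    have hrg : S.rng g = S.rng g' := by
      rw [← E.ρ_actL g z hp, ← E.ρ_actL g' z hp', hact]
    have hkey : E.actL (S.mul (S.inv g') g) z = z := by
      rw [E.actL_mul (S.inv g') g z (by rw [S.src_inv]; exact hrg.symm) hp, hact,
        ← E.actL_mul (S.inv g') g' z (S.src_inv g') hp', S.inv_mul g', hp']
      exact E.actL_unit z
    have hcompk : S.src (S.mul (S.inv g') g) = E.ρ z := by
      rw [S.src_mul _ _ (by rw [S.src_inv]; exact hrg.symm)]; exact hp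
    have hfree := E.free_actL _ z hcompk hkey
    have hgg : g = g' := by
      calc g = S.mul (S.rng g) g := (S.rng_mul_self g).symm
        _ = S.mul (S.rng g') g := by rw [hrg]
        _ = S.mul (S.mul g' (S.inv g')) g := by rw [S.mul_inv g']
        _ = S.mul g' (S.mul (S.inv g') g) :=
            S.mul_assoc g' (S.inv g') g (S.rng_inv g').symm
              (by rw [S.src_inv]; exact hrg.symm)
        _ = S.mul g' (E.ρ z) := by rw [hfree]
        _ = S.mul g' (S.src g') := by rw [hp']
        _ = g' := S.mul_src g'
    exact Subtype.ext (Prod.ext hgg rfl)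
  have hclosed : IsClosedEmbedding Φ :=
    IsClosedEmbedding.of_continuous_injective_isClosedMap hprop.continuous hΦinj
      hprop.isClosedMap
  have hrange : Set.range Φ = {p : Z × Z | E.σ p.1 = E.σ p.2} := by
    ext ⟨z₁, z₂⟩
    constructor
    · rintro ⟨⟨⟨g, z⟩, hp⟩, heq⟩
      obtain ⟨h1, h2⟩ := Prod.ext_iff.mp heq
      simp only at h1 h2
      show E.σ z₁ = E.σ z₂
      rw [← h1, ← h2]
      exact E.σ_actL g z hp
    · intro hσ
      obtain ⟨g, hg1, hg2⟩ := (E.σ_fiber_orbit z₂ z₁).mp ((by exact hσ : E.σ z₁ = E.σ z₂)).symm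
      exact ⟨⟨(g, z₂), hg1⟩, Prod.ext hg2.symm rfl⟩
  have hN₀ : IsOpen {p : {q : G × Z // S.src q.1 = E.ρ q.2} | p.1.1 ∈ S.units} :=
    (aux_isOpen_units hS).preimage (continuous_fst.comp continuous_subtype_val)
  obtain ⟨O, hOopen, hOpre⟩ := hclosed.toIsEmbedding.isInducing.isOpen_iff.mp hN₀
  have hdiag : (z₀, z₀) ∈ O := by
    have hp₀ : S.src (E.ρ z₀) = E.ρ z₀ := (E.ρ_unit z₀).1
    have hmem : (⟨(E.ρ z₀, z₀), hp₀⟩ : {q : G × Z // S.src q.1 = E.ρ q.2}) ∈ Φ ⁻¹' O := by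
      rw [hOpre]; exact E.ρ_unit z₀
    have heq : Φ ⟨(E.ρ z₀, z₀), hp₀⟩ = (z₀, z₀) := Prod.ext (E.actL_unit z₀) rfl
    rw [← heq]; exact hmem
  obtain ⟨U₁, U₂, hU₁, hU₂, hz₁, hz₂, hsub⟩ := isOpen_prod_iff.mp hOopen z₀ z₀ hdiag
  refine ⟨U₁ ∩ U₂, hU₁.inter hU₂, ⟨hz₁, hz₂⟩, ?_⟩
  intro z hz z' hz' hσ
  have hmem : (z, z') ∈ Set.range Φ := by rw [hrange]; exact hσ
  obtain ⟨⟨⟨g, w⟩, hp⟩, heq⟩ := hmem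
  obtain ⟨h1, h2⟩ := Prod.ext_iff.mp heq
  simp only [hΦdef] at h1 h2
  have hgO : (⟨(g, w), hp⟩ : {q : G × Z // S.src q.1 = E.ρ q.2}) ∈ Φ ⁻¹' O := by
    show Φ _ ∈ O
    rw [heq]; exact hsub ⟨hz.1, hz'.2⟩
  rw [hOpre] at hgO
  have hg : g = E.ρ w := hgO.1.symm.trans hp
  rw [← h1, ← h2, hg]
  exact E.actL_unit w

lemma exists_inj_rho (hT : T.IsAmple) (z₀ : Z) :
    ∃ U : Set Z, IsOpen U ∧ z₀ ∈ U ∧ Set.InjOn E.ρ U := by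
  have hprop : IsProperMap (fun p : {q : Z × H // E.σ q.1 = T.rng q.2} =>
      ((E.actR p.1.1 p.1.2, p.1.1) : Z × Z)) := E.proper_actR
  set Ψ : {q : Z × H // E.σ q.1 = T.rng q.2} → Z × Z :=
    fun p => (E.actR p.1.1 p.1.2, p.1.1) with hΨdef
  have hΨinj : Function.Injective Ψ := by
    rintro ⟨⟨z, h⟩, hp⟩ ⟨⟨z'', h'⟩, hp'⟩ heq
    obtain ⟨hact, hz⟩ := Prod.ext_iff.mp heq
    simp only [hΨdef] at hact hz hp hp'
    subst hz
    have hsrc : T.src h = T.src h' := by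
      rw [← E.σ_actR z h hp, ← E.σ_actR z h' hp', hact]
    have h₂ : T.src h' = T.rng (T.inv h) := by rw [T.rng_inv]; exact hsrc.symm
    have hkey : E.actR z (T.mul h' (T.inv h)) = z := by
      rw [← E.actR_mul z h' (T.inv h) hp' h₂, ← hact,
        E.actR_mul z h (T.inv h) hp (T.rng_inv h).symm, T.mul_inv h, ← hp]
      exact E.actR_unit z
    have hcompk : E.σ z = T.rng (T.mul h' (T.inv h)) := by
      rw [T.rng_mul _ _ h₂]; exact hp'
    have hfree := E.free_actR z _ hcompk hkey
    have hrng : T.rng h = T.rng h' := by rw [← hp, hp']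
    have hmm : T.mul (T.mul h' (T.inv h)) h = h' := by
      rw [T.mul_assoc h' (T.inv h) h h₂ (T.src_inv h), T.inv_mul h, hsrc, T.mul_src h']
    have hhh : h = h' := by
      rw [← hmm, hfree, hp]
      exact (T.rng_mul_self h).symm
    exact Subtype.ext (Prod.ext rfl hhh)
  have hclosed : IsClosedEmbedding Ψ :=
    IsClosedEmbedding.of_continuous_injective_isClosedMap hprop.continuous hΨinj
      hprop.isClosedMap
  have hrange : Set.range Ψ = {p : Z × Z | E.ρ p.1 = E.ρ p.2} := by
    ext ⟨z₁, z₂⟩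
    constructor
    · rintro ⟨⟨⟨z, h⟩, hp⟩, heq⟩
      obtain ⟨h1, h2⟩ := Prod.ext_iff.mp heq
      simp only at h1 h2
      show E.ρ z₁ = E.ρ z₂
      rw [← h1, ← h2]
      exact E.ρ_actR z h hp
    · intro hρ
      obtain ⟨h, hg1, hg2⟩ := (E.ρ_fiber_orbit z₂ z₁).mp ((by exact hρ : E.ρ z₁ = E.ρ z₂)).symm
      exact ⟨⟨(z₂, h), hg1⟩, Prod.ext hg2.symm rfl⟩
  have hN₀ : IsOpen {p : {q : Z × H // E.σ q.1 = T.rng q.2} | p.1.2 ∈ T.units} :=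
    (aux_isOpen_units hT).preimage (continuous_snd.comp continuous_subtype_val)
  obtain ⟨O, hOopen, hOpre⟩ := hclosed.toIsEmbedding.isInducing.isOpen_iff.mp hN₀
  have hdiag : (z₀, z₀) ∈ O := by
    have hp₀ : E.σ z₀ = T.rng (E.σ z₀) := (E.σ_unit z₀).2.symm
    have hmem : (⟨(z₀, E.σ z₀), hp₀⟩ : {q : Z × H // E.σ q.1 = T.rng q.2}) ∈ Ψ ⁻¹' O := by
      rw [hOpre]; exact E.σ_unit z₀
    have heq : Ψ ⟨(z₀, E.σ z₀), hp₀⟩ = (z₀, z₀) := Prod.ext (E.actR_unit z₀) rfl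
    rw [← heq]; exact hmem
  obtain ⟨U₁, U₂, hU₁, hU₂, hz₁, hz₂, hsub⟩ := isOpen_prod_iff.mp hOopen z₀ z₀ hdiag
  refine ⟨U₁ ∩ U₂, hU₁.inter hU₂, ⟨hz₁, hz₂⟩, ?_⟩
  intro z hz z' hz' hρ
  have hmem : (z, z') ∈ Set.range Ψ := by rw [hrange]; exact hρ
  obtain ⟨⟨⟨w, h⟩, hp⟩, heq⟩ := hmem
  obtain ⟨h1, h2⟩ := Prod.ext_iff.mp heq
  simp only [hΨdef] at h1 h2
  have hgO : (⟨(w, h), hp⟩ : {q : Z × H // E.σ q.1 = T.rng q.2}) ∈ Ψ ⁻¹' O := by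
    show Ψ _ ∈ O
    rw [heq]; exact hsub ⟨hz.1, hz'.2⟩
  rw [hOpre] at hgO
  have hh : h = E.σ w := hgO.2.symm.trans hp.symm
  rw [← h1, ← h2, hh]
  exact E.actR_unit w

lemma rhoM_isLocalHomeomorph (hS : S.IsAmple) (hT : T.IsAmple) :
    IsLocalHomeomorph (rhoM E) := by
  rw [isLocalHomeomorph_iff_isOpenEmbedding_restrict]
  intro z₀
  obtain ⟨U, hUo, hzU, hUinj⟩ := exists_inj_rho E hT z₀
  refine ⟨U, hUo.mem_nhds hzU, ?_⟩
  apply Topology.IsOpenEmbedding.of_continuous_injective_isOpenMap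
  · exact (rhoM_continuous E).comp continuous_subtype_val
  · intro a b hab
    exact Subtype.ext (hUinj a.2 b.2 (congrArg Subtype.val hab))
  · exact (rhoM_isOpenMap E hT).restrict hUo

lemma exists_slice (hS : S.IsAmple) (hT : T.IsAmple) {O : Set Z} (hO : IsOpen O)
    {z : Z} (hz : z ∈ O) :
    ∃ V : Set Z, z ∈ V ∧ V ⊆ O ∧ IsOpen V ∧ IsCompact V ∧
      Set.InjOn E.ρ V ∧ Set.InjOn E.σ V := by
  obtain ⟨U₁, hU₁o, hzU₁, hinjσ⟩ := exists_inj_sigma E hS z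
  obtain ⟨U₂, hU₂o, hzU₂, hinjρ⟩ := exists_inj_rho E hT z
  have hO'o : IsOpen (O ∩ U₁ ∩ U₂) := (hO.inter hU₁o).inter hU₂o
  have hzO' : z ∈ O ∩ U₁ ∩ U₂ := ⟨⟨hz, hzU₁⟩, hzU₂⟩
  obtain ⟨e, hze, hee⟩ := rhoM_isLocalHomeomorph E hS hT z
  have hez : ∀ w, (e : Z → S.units) w = rhoM E w := fun w => (congrFun hee w).symm
  have himo : IsOpen (↑e '' (e.source ∩ (O ∩ U₁ ∩ U₂))) :=
    e.isOpen_image_of_subset_source (e.open_source.inter hO'o) Set.inter_subset_left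
  have hmem : rhoM E z ∈ ↑e '' (e.source ∩ (O ∩ U₁ ∩ U₂)) :=
    ⟨z, ⟨hze, hzO'⟩, hez z⟩
  obtain ⟨A, hAc, hAo, hzA, hAsub⟩ := aux_exists_compactOpen_nhd hS (rhoM E z) himo hmem
  have hAt : A ⊆ e.target := by
    intro a ha
    obtain ⟨x, hx, rfl⟩ := hAsub ha
    exact e.map_source hx.1
  have hVsub : ↑e.symm '' A ⊆ e.source ∩ (O ∩ U₁ ∩ U₂) := by
    rintro v ⟨a, haA, rfl⟩
    obtain ⟨x, hx, rfl⟩ := hAsub haA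
    rw [e.left_inv hx.1]
    exact hx
  refine ⟨↑e.symm '' A, ?_, ?_, ?_, ?_, ?_, ?_⟩
  · exact ⟨rhoM E z, hzA, by rw [← hez z]; exact e.left_inv hze⟩
  · exact fun v hv => (hVsub hv).2.1.1
  · rw [e.symm_image_eq_source_inter_preimage hAt]
    exact e.isOpen_inter_preimage hAo
  · exact hAc.image_of_continuousOn (e.symm.continuousOn.mono hAt)
  · exact hinjρ.mono (fun v hv => (hVsub hv).2.2)
  · exact hinjσ.mono (fun v hv => (hVsub hv).2.1.2)

lemma aux_lemA {y v : Z} (h : E.σ y = E.σ v) : relU S (rhoM E y) (rhoM E v) := by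
  obtain ⟨g, hg1, hg2⟩ := (E.σ_fiber_orbit y v).mp h
  refine ⟨g, hg1, ?_⟩
  show S.rng g = E.ρ v
  rw [hg2, E.ρ_actL g y hg1]

lemma aux_lemA' {y v : Z} (h : E.ρ y = E.ρ v) : relU T (sigM E y) (sigM E v) := by
  obtain ⟨k, h1, h2⟩ := (E.ρ_fiber_orbit y v).mp h
  refine ⟨T.inv k, ?_, ?_⟩
  · show T.src (T.inv k) = E.σ y
    rw [T.src_inv, ← h1]
  · show T.rng (T.inv k) = E.σ v
    rw [T.rng_inv]
    show T.src k = E.σ v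
    rw [h2, E.σ_actR y k h1]

lemma aux_lemC {Y : Set Z} (z : Z) :
    rhoM E z ∈ satU S (rhoM E '' Y) ↔ sigM E z ∈ satU T (sigM E '' Y) := by
  constructor
  · rintro ⟨u, ⟨y, hy, rfl⟩, g, hgs, hgr⟩
    have hρ : E.ρ (E.actL g y) = E.ρ z := by rw [E.ρ_actL g y hgs]; exact hgr
    obtain ⟨h, hh1, hh2⟩ := (E.ρ_fiber_orbit (E.actL g y) z).mp hρ
    have hσy : E.σ (E.actL g y) = E.σ y := E.σ_actL g y hgs
    refine ⟨sigM E y, ⟨y, hy, rfl⟩, T.inv h, ?_, ?_⟩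
    · show T.src (T.inv h) = E.σ y
      rw [T.src_inv, ← hh1, hσy]
    · show T.rng (T.inv h) = E.σ z
      rw [T.rng_inv]
      show T.src h = E.σ z
      rw [hh2, E.σ_actR _ h hh1]
  · rintro ⟨u, ⟨y, hy, rfl⟩, h, hhs, hhr⟩
    have hcomp : E.σ y = T.rng (T.inv h) := by rw [T.rng_inv, hhs]; exact rfl
    have hσz' : E.σ (E.actR y (T.inv h)) = E.σ z := by
      rw [E.σ_actR y (T.inv h) hcomp, T.src_inv, hhr]; exact rfl
    obtain ⟨g, hg1, hg2⟩ := (E.σ_fiber_orbit (E.actR y (T.inv h)) z).mp hσz'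
    refine ⟨rhoM E y, ⟨y, hy, rfl⟩, g, ?_, ?_⟩
    · show S.src g = E.ρ y
      rw [hg1]
      exact E.ρ_actR y (T.inv h) hcomp
    · show S.rng g = E.ρ z
      rw [hg2, E.ρ_actL g _ hg1]

/-- The property of being a finite-stage good set in the construction. -/
def GoodSet (E : GroupoidEquivalenceData S T Z) (Y : Set Z) : Prop :=
  IsOpen Y ∧ IsCompact Y ∧ Set.InjOn E.ρ Y ∧ Set.InjOn E.σ Y

lemma goodSet_empty : GoodSet E (∅ : Set Z) :=
  ⟨isOpen_empty, isCompact_empty, Set.injOn_empty _, Set.injOn_empty _⟩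

lemma add_one (hS : S.IsAmple) (hT : T.IsAmple) {Y V : Set Z}
    (hY : GoodSet E Y) (hVo : IsOpen V) (hVc : IsCompact V)
    (hVρ : Set.InjOn E.ρ V) (hVσ : Set.InjOn E.σ V) :
    ∃ Y' : Set Z, GoodSet E Y' ∧ Y ⊆ Y' ∧ Y' ⊆ Y ∪ V ∧
      satU S (rhoM E '' V) ⊆ satU S (rhoM E '' Y') ∧
      satU T (sigM E '' V) ⊆ satU T (sigM E '' Y') := by
  haveI : T2Space S.units := hS.t2_units
  haveI : T2Space T.units := hT.t2_units
  have hρYop : IsOpen (rhoM E '' Y) := rhoM_isOpenMap E hT Y hY.1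
  have hσYop : IsOpen (sigM E '' Y) := sigM_isOpenMap E hS Y hY.1
  have hρYcl : IsClosed (rhoM E '' Y) := (hY.2.1.image (rhoM_continuous E)).isClosed
  have hσYcl : IsClosed (sigM E '' Y) := (hY.2.1.image (sigM_continuous E)).isClosed
  set W : Set Z := V ∩ ((rhoM E ⁻¹' (rhoM E '' Y))ᶜ ∩ (sigM E ⁻¹' (sigM E '' Y))ᶜ)
    with hWdef
  have hWV : W ⊆ V := Set.inter_subset_left
  have hWmem : ∀ v, v ∈ W ↔ v ∈ V ∧ rhoM E v ∉ rhoM E '' Y ∧ sigM E v ∉ sigM E '' Y := by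
    intro v
    constructor
    · rintro ⟨h1, h2, h3⟩; exact ⟨h1, h2, h3⟩
    · rintro ⟨h1, h2, h3⟩; exact ⟨h1, h2, h3⟩
  have hWo : IsOpen W :=
    hVo.inter ((isOpen_compl_iff.mpr (hρYcl.preimage (rhoM_continuous E))).inter
      (isOpen_compl_iff.mpr (hσYcl.preimage (sigM_continuous E))))
  have hWc : IsCompact W :=
    hVc.inter_right (((hρYop.preimage (rhoM_continuous E)).isClosed_compl).inter
      ((hσYop.preimage (sigM_continuous E)).isClosed_compl))
  refine ⟨Y ∪ W, ⟨hY.1.union hWo, hY.2.1.union hWc, ?_, ?_⟩, Set.subset_union_left,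
    Set.union_subset_union_right Y hWV, ?_, ?_⟩
  · -- InjOn ρ
    intro a ha b hb hab
    rcases ha with ha | ha
    · rcases hb with hb | hb
      · exact hY.2.2.1 ha hb hab
      · exfalso
        exact ((hWmem b).mp hb).2.1 ⟨a, ha, Subtype.ext hab⟩
    · rcases hb with hb | hb
      · exfalso
        exact ((hWmem a).mp ha).2.1 ⟨b, hb, Subtype.ext hab.symm⟩
      · exact hVρ (hWV ha) (hWV hb) hab
  · -- InjOn σ
    intro a ha b hb hab
    rcases ha with ha | ha
    · rcases hb with hb | hb
      · exact hY.2.2.2 ha hb hab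
      · exfalso
        exact ((hWmem b).mp hb).2.2 ⟨a, ha, Subtype.ext hab⟩
    · rcases hb with hb | hb
      · exfalso
        exact ((hWmem a).mp ha).2.2 ⟨b, hb, Subtype.ext hab.symm⟩
      · exact hVσ (hWV ha) (hWV hb) hab
  · -- sat S coverage
    rintro w ⟨uv, ⟨v, hv, rfl⟩, hrel⟩
    by_cases hvW : v ∈ W
    · exact ⟨rhoM E v, ⟨v, Or.inr hvW, rfl⟩, hrel⟩
    · have hcase : rhoM E v ∈ rhoM E '' Y ∨ sigM E v ∈ sigM E '' Y := by
        by_contra hcon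
        push_neg at hcon
        exact hvW ((hWmem v).mpr ⟨hv, hcon.1, hcon.2⟩)
      rcases hcase with hcase | hcase
      · obtain ⟨y, hy, hyv⟩ := hcase
        refine ⟨rhoM E y, ⟨y, Or.inl hy, rfl⟩, ?_⟩
        rw [hyv]
        exact hrel
      · obtain ⟨y, hy, hyv⟩ := hcase
        have hrel2 : relU S (rhoM E y) (rhoM E v) :=
          aux_lemA E (congrArg Subtype.val hyv)
        exact ⟨rhoM E y, ⟨y, Or.inl hy, rfl⟩, relU_trans hrel2 hrel⟩
  · -- sat T coverage
    rintro w ⟨uv, ⟨v, hv, rfl⟩, hrel⟩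
    by_cases hvW : v ∈ W
    · exact ⟨sigM E v, ⟨v, Or.inr hvW, rfl⟩, hrel⟩
    · have hcase : rhoM E v ∈ rhoM E '' Y ∨ sigM E v ∈ sigM E '' Y := by
        by_contra hcon
        push_neg at hcon
        exact hvW ((hWmem v).mpr ⟨hv, hcon.1, hcon.2⟩)
      rcases hcase with hcase | hcase
      · obtain ⟨y, hy, hyv⟩ := hcase
        have hrel2 : relU T (sigM E y) (sigM E v) :=
          aux_lemA' E (congrArg Subtype.val hyv)
        exact ⟨sigM E y, ⟨y, Or.inl hy, rfl⟩, relU_trans hrel2 hrel⟩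
      · obtain ⟨y, hy, hyv⟩ := hcase
        refine ⟨sigM E y, ⟨y, Or.inl hy, rfl⟩, ?_⟩
        rw [hyv]
        exact hrel

lemma grow_list (hS : S.IsAmple) (hT : T.IsAmple) {ι : Type*} (V : ι → Set Z)
    (hVo : ∀ i, IsOpen (V i)) (hVc : ∀ i, IsCompact (V i))
    (hVρ : ∀ i, Set.InjOn E.ρ (V i)) (hVσ : ∀ i, Set.InjOn E.σ (V i))
    (l : List ι) {Y : Set Z} (hY : GoodSet E Y) :
    ∃ Y', GoodSet E Y' ∧ Y ⊆ Y' ∧ Y' ⊆ Y ∪ ⋃ i ∈ l, V i ∧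
      (∀ i ∈ l, satU S (rhoM E '' (V i)) ⊆ satU S (rhoM E '' Y')) ∧
      (∀ i ∈ l, satU T (sigM E '' (V i)) ⊆ satU T (sigM E '' Y')) := by
  induction l generalizing Y with
  | nil => exact ⟨Y, hY, subset_rfl, by simp, by simp, by simp⟩
  | cons i l ih =>
    obtain ⟨Y₀, hY₀, hYY₀, hY₀sub, hcovS, hcovT⟩ :=
      add_one E hS hT hY (hVo i) (hVc i) (hVρ i) (hVσ i)
    obtain ⟨Y₁, hY₁, hY₀Y₁, hY₁sub, hcovS', hcovT'⟩ := ih hY₀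
    refine ⟨Y₁, hY₁, hYY₀.trans hY₀Y₁, ?_, ?_, ?_⟩
    · intro x hx
      rcases hY₁sub hx with hx | hx
      · rcases hY₀sub hx with hx | hx
        · exact Or.inl hx
        · exact Or.inr (Set.mem_biUnion (List.mem_cons_self) hx)
      · obtain ⟨j, hj, hxj⟩ := Set.mem_iUnion₂.mp hx
        exact Or.inr (Set.mem_biUnion (List.mem_cons_of_mem i hj) hxj)
    · intro j hj
      rcases List.mem_cons.mp hj with rfl | hj
      · exact hcovS.trans (satU_mono (Set.image_mono hY₀Y₁))
      · exact hcovS' j hj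
    · intro j hj
      rcases List.mem_cons.mp hj with rfl | hj
      · exact hcovT.trans (satU_mono (Set.image_mono hY₀Y₁))
      · exact hcovT' j hj

lemma core_step_rho (hS : S.IsAmple) (hT : T.IsAmple) {Y : Set Z} (hY : GoodSet E Y)
    {D : Set S.units} (hDcl : IsClosed D) (hD : D ⊆ satU S (rhoM E '' Y))
    {D' : Set T.units} (hD'cl : IsClosed D') (hD' : D' ⊆ satU T (sigM E '' Y))
    {C : Set S.units} (hC : IsCompact C) :
    ∃ Y', GoodSet E Y' ∧ Y ⊆ Y' ∧ C ⊆ satU S (rhoM E '' Y') ∧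
      rhoM E '' Y' ⊆ rhoM E '' Y ∪ Dᶜ ∧ sigM E '' Y' ⊆ sigM E '' Y ∪ D'ᶜ := by
  haveI : T2Space S.units := hS.t2_units
  haveI : T2Space T.units := hT.t2_units
  have hρYop : IsOpen (rhoM E '' Y) := rhoM_isOpenMap E hT Y hY.1
  have hsat_open : IsOpen (satU S (rhoM E '' Y)) := isOpen_satU hS hρYop
  have hC'c : IsCompact (C ∩ (satU S (rhoM E '' Y))ᶜ) :=
    hC.inter_right hsat_open.isClosed_compl
  have key : ∀ i : {u : S.units // u ∈ C ∩ (satU S (rhoM E '' Y))ᶜ},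
      ∃ V : Set Z, IsOpen V ∧ IsCompact V ∧
      Set.InjOn E.ρ V ∧ Set.InjOn E.σ V ∧ (i : S.units) ∈ rhoM E '' V ∧
      rhoM E '' V ⊆ (D ∪ rhoM E '' Y)ᶜ ∧ sigM E '' V ⊆ (D' ∪ sigM E '' Y)ᶜ := by
    rintro ⟨u, hu⟩
    have husat : u ∉ satU S (rhoM E '' Y) := hu.2
    obtain ⟨z, hz⟩ : ∃ z, E.ρ z = (u : G) := by
      have : (u : G) ∈ Set.range E.ρ := by rw [E.ρ_surj]; exact u.2
      exact this
    have hzu : rhoM E z = u := Subtype.ext hz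
    have hρz : rhoM E z ∉ satU S (rhoM E '' Y) := by rw [hzu]; exact husat
    have hσz : sigM E z ∉ satU T (sigM E '' Y) := fun hh => hρz ((aux_lemC E z).mpr hh)
    have hρz2 : rhoM E z ∈ (D ∪ rhoM E '' Y)ᶜ := by
      rintro (h | h)
      · exact hρz (hD h)
      · exact hρz (subset_satU h)
    have hσz2 : sigM E z ∈ (D' ∪ sigM E '' Y)ᶜ := by
      rintro (h | h)
      · exact hσz (hD' h)
      · exact hσz (subset_satU h)
    have hσYcl : IsClosed (sigM E '' Y) := (hY.2.1.image (sigM_continuous E)).isClosed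
    have hρYcl : IsClosed (rhoM E '' Y) := (hY.2.1.image (rhoM_continuous E)).isClosed
    have hOo : IsOpen (rhoM E ⁻¹' (D ∪ rhoM E '' Y)ᶜ ∩ sigM E ⁻¹' (D' ∪ sigM E '' Y)ᶜ) :=
      ((isOpen_compl_iff.mpr (hDcl.union hρYcl)).preimage (rhoM_continuous E)).inter
        ((isOpen_compl_iff.mpr (hD'cl.union hσYcl)).preimage (sigM_continuous E))
    obtain ⟨V, hzV, hVsub, hVo, hVc, hVρ, hVσ⟩ := exists_slice E hS hT hOo ⟨hρz2, hσz2⟩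
    refine ⟨V, hVo, hVc, hVρ, hVσ, ⟨z, hzV, hzu⟩, ?_, ?_⟩
    · rintro _ ⟨v, hv, rfl⟩; exact (hVsub hv).1
    · rintro _ ⟨v, hv, rfl⟩; exact (hVsub hv).2
  choose V hVo hVc hVρ hVσ hVmem hVρsub hVσsub using key
  have hcov : C ∩ (satU S (rhoM E '' Y))ᶜ ⊆
      ⋃ i : {u : S.units // u ∈ C ∩ (satU S (rhoM E '' Y))ᶜ},
        satU S (rhoM E '' V i) := by
    intro u hu
    exact Set.mem_iUnion.mpr ⟨⟨u, hu⟩, subset_satU (hVmem ⟨u, hu⟩)⟩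
  obtain ⟨t, ht⟩ := hC'c.elim_finite_subcover _
    (fun i => isOpen_satU hS (rhoM_isOpenMap E hT _ (hVo i))) hcov
  obtain ⟨Y', hY', hYY', hY'sub, hcovS, _⟩ :=
    grow_list E hS hT V hVo hVc hVρ hVσ t.toList hY
  have hmono : satU S (rhoM E '' Y) ⊆ satU S (rhoM E '' Y') :=
    satU_mono (Set.image_mono hYY')
  refine ⟨Y', hY', hYY', ?_, ?_, ?_⟩
  · intro u hu
    by_cases hus : u ∈ satU S (rhoM E '' Y)
    · exact hmono hus
    · obtain ⟨i, hi⟩ := Set.mem_iUnion₂.mp (ht ⟨hu, hus⟩)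
      obtain ⟨hit, hui⟩ := hi
      exact hcovS i (Finset.mem_toList.mpr hit) hui
  · rintro _ ⟨y, hy, rfl⟩
    rcases hY'sub hy with hyY | hyV
    · exact Or.inl ⟨y, hyY, rfl⟩
    · obtain ⟨i, _, hyi⟩ := Set.mem_iUnion₂.mp hyV
      exact Or.inr (fun hmem => (hVρsub i ⟨y, hyi, rfl⟩) (Or.inl hmem))
  · rintro _ ⟨y, hy, rfl⟩
    rcases hY'sub hy with hyY | hyV
    · exact Or.inl ⟨y, hyY, rfl⟩
    · obtain ⟨i, _, hyi⟩ := Set.mem_iUnion₂.mp hyV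
      exact Or.inr (fun hmem => (hVσsub i ⟨y, hyi, rfl⟩) (Or.inl hmem))

lemma core_step_sigma (hS : S.IsAmple) (hT : T.IsAmple) {Y : Set Z} (hY : GoodSet E Y)
    {D : Set S.units} (hDcl : IsClosed D) (hD : D ⊆ satU S (rhoM E '' Y))
    {D' : Set T.units} (hD'cl : IsClosed D') (hD' : D' ⊆ satU T (sigM E '' Y))
    {C : Set T.units} (hC : IsCompact C) :
    ∃ Y', GoodSet E Y' ∧ Y ⊆ Y' ∧ C ⊆ satU T (sigM E '' Y') ∧
      rhoM E '' Y' ⊆ rhoM E '' Y ∪ Dᶜ ∧ sigM E '' Y' ⊆ sigM E '' Y ∪ D'ᶜ := by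
  haveI : T2Space S.units := hS.t2_units
  haveI : T2Space T.units := hT.t2_units
  have hσYop : IsOpen (sigM E '' Y) := sigM_isOpenMap E hS Y hY.1
  have hsat_open : IsOpen (satU T (sigM E '' Y)) := isOpen_satU hT hσYop
  have hC'c : IsCompact (C ∩ (satU T (sigM E '' Y))ᶜ) :=
    hC.inter_right hsat_open.isClosed_compl
  have key : ∀ i : {u : T.units // u ∈ C ∩ (satU T (sigM E '' Y))ᶜ},
      ∃ V : Set Z, IsOpen V ∧ IsCompact V ∧
      Set.InjOn E.ρ V ∧ Set.InjOn E.σ V ∧ (i : T.units) ∈ sigM E '' V ∧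
      rhoM E '' V ⊆ (D ∪ rhoM E '' Y)ᶜ ∧ sigM E '' V ⊆ (D' ∪ sigM E '' Y)ᶜ := by
    rintro ⟨u, hu⟩
    have husat : u ∉ satU T (sigM E '' Y) := hu.2
    obtain ⟨z, hz⟩ : ∃ z, E.σ z = (u : H) := by
      have : (u : H) ∈ Set.range E.σ := by rw [E.σ_surj]; exact u.2
      exact this
    have hzu : sigM E z = u := Subtype.ext hz
    have hσz : sigM E z ∉ satU T (sigM E '' Y) := by rw [hzu]; exact husat
    have hρz : rhoM E z ∉ satU S (rhoM E '' Y) := fun hh => hσz ((aux_lemC E z).mp hh)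
    have hρz2 : rhoM E z ∈ (D ∪ rhoM E '' Y)ᶜ := by
      rintro (h | h)
      · exact hρz (hD h)
      · exact hρz (subset_satU h)
    have hσz2 : sigM E z ∈ (D' ∪ sigM E '' Y)ᶜ := by
      rintro (h | h)
      · exact hσz (hD' h)
      · exact hσz (subset_satU h)
    have hσYcl : IsClosed (sigM E '' Y) := (hY.2.1.image (sigM_continuous E)).isClosed
    have hρYcl : IsClosed (rhoM E '' Y) := (hY.2.1.image (rhoM_continuous E)).isClosed
    have hOo : IsOpen (rhoM E ⁻¹' (D ∪ rhoM E '' Y)ᶜ ∩ sigM E ⁻¹' (D' ∪ sigM E '' Y)ᶜ) :=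
      ((isOpen_compl_iff.mpr (hDcl.union hρYcl)).preimage (rhoM_continuous E)).inter
        ((isOpen_compl_iff.mpr (hD'cl.union hσYcl)).preimage (sigM_continuous E))
    obtain ⟨V, hzV, hVsub, hVo, hVc, hVρ, hVσ⟩ := exists_slice E hS hT hOo ⟨hρz2, hσz2⟩
    refine ⟨V, hVo, hVc, hVρ, hVσ, ⟨z, hzV, hzu⟩, ?_, ?_⟩
    · rintro _ ⟨v, hv, rfl⟩; exact (hVsub hv).1
    · rintro _ ⟨v, hv, rfl⟩; exact (hVsub hv).2
  choose V hVo hVc hVρ hVσ hVmem hVρsub hVσsub using key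
  have hcov : C ∩ (satU T (sigM E '' Y))ᶜ ⊆
      ⋃ i : {u : T.units // u ∈ C ∩ (satU T (sigM E '' Y))ᶜ},
        satU T (sigM E '' V i) := by
    intro u hu
    exact Set.mem_iUnion.mpr ⟨⟨u, hu⟩, subset_satU (hVmem ⟨u, hu⟩)⟩
  obtain ⟨t, ht⟩ := hC'c.elim_finite_subcover _
    (fun i => isOpen_satU hT (sigM_isOpenMap E hS _ (hVo i))) hcov
  obtain ⟨Y', hY', hYY', hY'sub, _, hcovT⟩ :=
    grow_list E hS hT V hVo hVc hVρ hVσ t.toList hY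
  have hmono : satU T (sigM E '' Y) ⊆ satU T (sigM E '' Y') :=
    satU_mono (Set.image_mono hYY')
  refine ⟨Y', hY', hYY', ?_, ?_, ?_⟩
  · intro u hu
    by_cases hus : u ∈ satU T (sigM E '' Y)
    · exact hmono hus
    · obtain ⟨i, hi⟩ := Set.mem_iUnion₂.mp (ht ⟨hu, hus⟩)
      obtain ⟨hit, hui⟩ := hi
      exact hcovT i (Finset.mem_toList.mpr hit) hui
  · rintro _ ⟨y, hy, rfl⟩
    rcases hY'sub hy with hyY | hyV
    · exact Or.inl ⟨y, hyY, rfl⟩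
    · obtain ⟨i, _, hyi⟩ := Set.mem_iUnion₂.mp hyV
      exact Or.inr (fun hmem => (hVρsub i ⟨y, hyi, rfl⟩) (Or.inl hmem))
  · rintro _ ⟨y, hy, rfl⟩
    rcases hY'sub hy with hyY | hyV
    · exact Or.inl ⟨y, hyY, rfl⟩
    · obtain ⟨i, _, hyi⟩ := Set.mem_iUnion₂.mp hyV
      exact Or.inr (fun hmem => (hVσsub i ⟨y, hyi, rfl⟩) (Or.inl hmem))

/-- The invariant carried through the recursive construction. -/
def StageProp (E : GroupoidEquivalenceData S T Z) (A : ℕ → Set S.units)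
    (B : ℕ → Set T.units) (n : ℕ) (Y : Set Z) : Prop :=
  GoodSet E Y ∧ (∀ m, 2*m < n → A m ⊆ satU S (rhoM E '' Y)) ∧
    (∀ m, 2*m+1 < n → B m ⊆ satU T (sigM E '' Y))

lemma stage_step (hS : S.IsAmple) (hT : T.IsAmple)
    {A : ℕ → Set S.units} (hAc : ∀ n, IsCompact (A n))
    {B : ℕ → Set T.units} (hBc : ∀ n, IsCompact (B n))
    (n : ℕ) (Y : Set Z) (hQ : StageProp E A B n Y) :
    ∃ Y', Y ⊆ Y' ∧ StageProp E A B (n+1) Y' ∧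
      (∀ m, 2*m < n → rhoM E '' Y' ∩ A m ⊆ rhoM E '' Y) ∧
      (∀ m, 2*m+1 < n → sigM E '' Y' ∩ B m ⊆ sigM E '' Y) := by
  obtain ⟨hGood, hPA, hPB⟩ := hQ
  haveI : T2Space S.units := hS.t2_units
  haveI : T2Space T.units := hT.t2_units
  have hDcl : IsClosed (⋃ k ∈ Finset.range ((n+1)/2), A k) :=
    ((Finset.range ((n+1)/2)).finite_toSet.isCompact_biUnion (fun k _ => hAc k)).isClosed
  have hD'cl : IsClosed (⋃ k ∈ Finset.range (n/2), B k) :=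
    ((Finset.range (n/2)).finite_toSet.isCompact_biUnion (fun k _ => hBc k)).isClosed
  have hD : (⋃ k ∈ Finset.range ((n+1)/2), A k) ⊆ satU S (rhoM E '' Y) := by
    intro x hx
    obtain ⟨k, hk, hxk⟩ := Set.mem_iUnion₂.mp hx
    exact hPA k (by have := Finset.mem_range.mp hk; omega) hxk
  have hD' : (⋃ k ∈ Finset.range (n/2), B k) ⊆ satU T (sigM E '' Y) := by
    intro x hx
    obtain ⟨k, hk, hxk⟩ := Set.mem_iUnion₂.mp hx
    exact hPB k (by have := Finset.mem_range.mp hk; omega) hxk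
  rcases Nat.even_or_odd n with ⟨m, hm⟩ | ⟨m, hm⟩
  · obtain ⟨Y', hGood', hYY', hC, hbρ, hbσ⟩ :=
      core_step_rho E hS hT hGood hDcl hD hD'cl hD' (hAc m)
    have hmonoS : satU S (rhoM E '' Y) ⊆ satU S (rhoM E '' Y') :=
      satU_mono (Set.image_mono hYY')
    have hmonoT : satU T (sigM E '' Y) ⊆ satU T (sigM E '' Y') :=
      satU_mono (Set.image_mono hYY')
    refine ⟨Y', hYY', ⟨hGood', ?_, ?_⟩, ?_, ?_⟩
    · intro m' hm'
      by_cases h : 2*m' < n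
      · exact (hPA m' h).trans hmonoS
      · have hmm : m' = m := by omega
        rw [hmm]; exact hC
    · intro m' hm'
      exact (hPB m' (by omega)).trans hmonoT
    · intro m' hm' x hx
      rcases hbρ hx.1 with h | h
      · exact h
      · exact absurd (Set.mem_iUnion₂.mpr ⟨m', Finset.mem_range.mpr (by omega), hx.2⟩) h
    · intro m' hm' x hx
      rcases hbσ hx.1 with h | h
      · exact h
      · exact absurd (Set.mem_iUnion₂.mpr ⟨m', Finset.mem_range.mpr (by omega), hx.2⟩) h
  · obtain ⟨Y', hGood', hYY', hC, hbρ, hbσ⟩ :=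
      core_step_sigma E hS hT hGood hDcl hD hD'cl hD' (hBc m)
    have hmonoS : satU S (rhoM E '' Y) ⊆ satU S (rhoM E '' Y') :=
      satU_mono (Set.image_mono hYY')
    have hmonoT : satU T (sigM E '' Y) ⊆ satU T (sigM E '' Y') :=
      satU_mono (Set.image_mono hYY')
    refine ⟨Y', hYY', ⟨hGood', ?_, ?_⟩, ?_, ?_⟩
    · intro m' hm'
      exact (hPA m' (by omega)).trans hmonoS
    · intro m' hm'
      by_cases h : 2*m'+1 < n
      · exact (hPB m' h).trans hmonoT
      · have hmm : m' = m := by omega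
        rw [hmm]; exact hC
    · intro m' hm' x hx
      rcases hbρ hx.1 with h | h
      · exact h
      · exact absurd (Set.mem_iUnion₂.mpr ⟨m', Finset.mem_range.mpr (by omega), hx.2⟩) h
    · intro m' hm' x hx
      rcases hbσ hx.1 with h | h
      · exact h
      · exact absurd (Set.mem_iUnion₂.mpr ⟨m', Finset.mem_range.mpr (by omega), hx.2⟩) h

end AuxEquiv

open GroupoidStruct in
/-- If `Z` is an equivalence between ample groupoids `G` and `H` with σ-compact unit spaces,
then there is an open `Y ⊆ Z` on which both anchor maps are injective, such that `ρ(Y)` is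
clopen in `G⁰` and `G`-full and `σ(Y)` is clopen in `H⁰` and `H`-full. -/
theorem exists_full_bisection_in_equivalence
    {G : Type u} {H : Type v} {Z : Type w}
    [TopologicalSpace G] [TopologicalSpace H] [TopologicalSpace Z]
    (S : GroupoidStruct G) (T : GroupoidStruct H)
    (hS : S.IsAmple) (hT : T.IsAmple)
    (hSc : IsSigmaCompact S.units) (hTc : IsSigmaCompact T.units)
    (E : GroupoidEquivalenceData S T Z) :
    ∃ Y : Set Z, IsOpen Y ∧ Set.InjOn E.ρ Y ∧ Set.InjOn E.σ Y ∧
      S.IsUnitClopen (E.ρ '' Y) ∧ S.IsFull (E.ρ '' Y) ∧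
      T.IsUnitClopen (E.σ '' Y) ∧ T.IsFull (E.σ '' Y) := by
  classical
  haveI : T2Space S.units := hS.t2_units
  haveI : T2Space T.units := hT.t2_units
  obtain ⟨A, hAc, hAo, hAU⟩ := aux_exists_exhaustion hS hSc
  obtain ⟨B, hBc, hBo, hBU⟩ := aux_exists_exhaustion hT hTc
  have hstep := fun (n : ℕ) (Y : Set Z) (hQ : StageProp E A B n Y) =>
    stage_step E hS hT hAc hBc n Y hQ
  choose stepY stepSub stepQ stepA stepB using hstep
  have hQ0 : StageProp E A B 0 ∅ :=
    ⟨goodSet_empty E, fun m hm => absurd hm (by omega), fun m hm => absurd hm (by omega)⟩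
  let F : (n : ℕ) → {Y : Set Z // StageProp E A B n Y} := fun n =>
    Nat.rec ⟨∅, hQ0⟩ (fun k prev => ⟨stepY k prev.1 prev.2, stepQ k prev.1 prev.2⟩) n
  have hF1 : ∀ n, (F n).1 ⊆ (F (n+1)).1 := fun n => stepSub n (F n).1 (F n).2
  have hFmono : ∀ a b, a ≤ b → (F a).1 ⊆ (F b).1 := by
    intro a b hab
    induction hab with
    | refl => exact subset_rfl
    | step _ ih => exact ih.trans (hF1 _)
  have hGood : ∀ n, GoodSet E (F n).1 := fun n => (F n).2.1
  have hstabA : ∀ m n, 2*m+1 ≤ n →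
      rhoM E '' (F n).1 ∩ A m ⊆ rhoM E '' (F (2*m+1)).1 := by
    intro m n hn
    induction n with
    | zero => exact absurd hn (by omega)
    | succ k ih =>
      by_cases hk : 2*m+1 ≤ k
      · intro x hx
        have h1 : x ∈ rhoM E '' (F k).1 :=
          stepA k (F k).1 (F k).2 m (by omega) ⟨hx.1, hx.2⟩
        exact ih hk ⟨h1, hx.2⟩
      · have hke : k + 1 = 2*m+1 := by omega
        rw [hke]
        exact Set.inter_subset_left
  have hstabB : ∀ m n, 2*m+2 ≤ n →
      sigM E '' (F n).1 ∩ B m ⊆ sigM E '' (F (2*m+2)).1 := by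
    intro m n hn
    induction n with
    | zero => exact absurd hn (by omega)
    | succ k ih =>
      by_cases hk : 2*m+2 ≤ k
      · intro x hx
        have h1 : x ∈ sigM E '' (F k).1 :=
          stepB k (F k).1 (F k).2 m (by omega) ⟨hx.1, hx.2⟩
        exact ih hk ⟨h1, hx.2⟩
      · have hke : k + 1 = 2*m+2 := by omega
        rw [hke]
        exact Set.inter_subset_left
  have hsubY : ∀ n, (F n).1 ⊆ ⋃ n, (F n).1 :=
    fun n => Set.subset_iUnion (fun n => (F n).1) n
  have hcovA : ∀ m, A m ⊆ satU S (rhoM E '' ⋃ n, (F n).1) := fun m =>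
    ((F (2*m+1)).2.2.1 m (by omega)).trans
      (satU_mono (Set.image_mono (hsubY (2*m+1))))
  have hcovB : ∀ m, B m ⊆ satU T (sigM E '' ⋃ n, (F n).1) := fun m =>
    ((F (2*m+2)).2.2.2 m (by omega)).trans
      (satU_mono (Set.image_mono (hsubY (2*m+2))))
  have hρim : rhoM E '' (⋃ n, (F n).1) = ⋃ n, rhoM E '' (F n).1 := Set.image_iUnion
  have hσim : sigM E '' (⋃ n, (F n).1) = ⋃ n, sigM E '' (F n).1 := Set.image_iUnion
  have hρopen : IsOpen (rhoM E '' ⋃ n, (F n).1) := by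
    rw [hρim]
    exact isOpen_iUnion (fun n => rhoM_isOpenMap E hT _ (hGood n).1)
  have hσopen : IsOpen (sigM E '' ⋃ n, (F n).1) := by
    rw [hσim]
    exact isOpen_iUnion (fun n => sigM_isOpenMap E hS _ (hGood n).1)
  have hρcl : IsClosed (rhoM E '' ⋃ n, (F n).1) := by
    rw [← isOpen_compl_iff, isOpen_iff_forall_mem_open]
    intro x hx
    have hxA : x ∈ ⋃ m, A m := by rw [hAU]; trivial
    obtain ⟨m, hm⟩ := Set.mem_iUnion.mp hxA
    refine ⟨A m ∩ (rhoM E '' (F (2*m+1)).1)ᶜ, ?_, (hAo m).inter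
      (isOpen_compl_iff.mpr ((hGood (2*m+1)).2.1.image (rhoM_continuous E)).isClosed),
      hm, fun hc => hx (by rw [hρim]; exact Set.mem_iUnion.mpr ⟨2*m+1, hc⟩)⟩
    rintro y ⟨hyA, hyc⟩ hy'
    rw [hρim] at hy'
    obtain ⟨n, hyn⟩ := Set.mem_iUnion.mp hy'
    have hyn' : y ∈ rhoM E '' (F (max n (2*m+1))).1 :=
      Set.image_mono (hFmono n _ (le_max_left _ _)) hyn
    exact hyc (hstabA m (max n (2*m+1)) (le_max_right _ _) ⟨hyn', hyA⟩)
  have hσcl : IsClosed (sigM E '' ⋃ n, (F n).1) := by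
    rw [← isOpen_compl_iff, isOpen_iff_forall_mem_open]
    intro x hx
    have hxB : x ∈ ⋃ m, B m := by rw [hBU]; trivial
    obtain ⟨m, hm⟩ := Set.mem_iUnion.mp hxB
    refine ⟨B m ∩ (sigM E '' (F (2*m+2)).1)ᶜ, ?_, (hBo m).inter
      (isOpen_compl_iff.mpr ((hGood (2*m+2)).2.1.image (sigM_continuous E)).isClosed),
      hm, fun hc => hx (by rw [hσim]; exact Set.mem_iUnion.mpr ⟨2*m+2, hc⟩)⟩
    rintro y ⟨hyB, hyc⟩ hy'
    rw [hσim] at hy'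
    obtain ⟨n, hyn⟩ := Set.mem_iUnion.mp hy'
    have hyn' : y ∈ sigM E '' (F (max n (2*m+2))).1 :=
      Set.image_mono (hFmono n _ (le_max_left _ _)) hyn
    exact hyc (hstabB m (max n (2*m+2)) (le_max_right _ _) ⟨hyn', hyB⟩)
  have hρset : {x : S.units | (x : G) ∈ E.ρ '' ⋃ n, (F n).1} =
      rhoM E '' ⋃ n, (F n).1 := by
    ext x
    constructor
    · rintro ⟨z, hz, hzx⟩
      exact ⟨z, hz, Subtype.ext hzx⟩
    · rintro ⟨z, hz, rfl⟩
      exact ⟨z, hz, rfl⟩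
  have hσset : {x : T.units | (x : H) ∈ E.σ '' ⋃ n, (F n).1} =
      sigM E '' ⋃ n, (F n).1 := by
    ext x
    constructor
    · rintro ⟨z, hz, hzx⟩
      exact ⟨z, hz, Subtype.ext hzx⟩
    · rintro ⟨z, hz, rfl⟩
      exact ⟨z, hz, rfl⟩
  refine ⟨⋃ n, (F n).1, isOpen_iUnion (fun n => (hGood n).1), ?_, ?_, ⟨?_, ?_⟩, ?_,
    ⟨?_, ?_⟩, ?_⟩
  · intro a ha b hb hab
    obtain ⟨na, hna⟩ := Set.mem_iUnion.mp ha
    obtain ⟨nb, hnb⟩ := Set.mem_iUnion.mp hb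
    rcases le_total na nb with h | h
    · exact (hGood nb).2.2.1 (hFmono na nb h hna) hnb hab
    · exact (hGood na).2.2.1 hna (hFmono nb na h hnb) hab
  · intro a ha b hb hab
    obtain ⟨na, hna⟩ := Set.mem_iUnion.mp ha
    obtain ⟨nb, hnb⟩ := Set.mem_iUnion.mp hb
    rcases le_total na nb with h | h
    · exact (hGood nb).2.2.2 (hFmono na nb h hna) hnb hab
    · exact (hGood na).2.2.2 hna (hFmono nb na h hnb) hab
  · rintro _ ⟨z, hz, rfl⟩
    exact E.ρ_unit z
  · rw [hρset]
    exact ⟨hρcl, hρopen⟩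
  · apply Set.Subset.antisymm
    · rintro _ ⟨g, _, rfl⟩
      exact aux_mem_units_iff_rng.mpr (S.rng_rng g)
    · intro u hu
      have hxA : (⟨u, hu⟩ : S.units) ∈ ⋃ m, A m := by rw [hAU]; trivial
      obtain ⟨m, hm⟩ := Set.mem_iUnion.mp hxA
      obtain ⟨uy, ⟨y, hy, rfl⟩, g, hg1, hg2⟩ := hcovA m hm
      exact ⟨g, ⟨y, hy, hg1.symm⟩, hg2⟩
  · rintro _ ⟨z, hz, rfl⟩
    exact E.σ_unit z
  · rw [hσset]
    exact ⟨hσcl, hσopen⟩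
  · apply Set.Subset.antisymm
    · rintro _ ⟨h, _, rfl⟩
      exact aux_mem_units_iff_rng.mpr (T.rng_rng h)
    · intro u hu
      have hxB : (⟨u, hu⟩ : T.units) ∈ ⋃ m, B m := by rw [hBU]; trivial
      obtain ⟨m, hm⟩ := Set.mem_iUnion.mp hxB
      obtain ⟨uy, ⟨y, hy, rfl⟩, h, hh1, hh2⟩ := hcovB m hm
      exact ⟨h, ⟨y, hy, hh1.symm⟩, hh2⟩
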